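/- arXiv:0910.2247 — 2 statements merged into one kernel-verified Lean document; each statement's English description precedes it below -/
import Mathlib

section
/- For all real numbers X, (S(X) - S(0))^2 ≤ S(X^2) - S(0), where S(z) = 1/(1+e^{-z}) is the logistic sigmoid. In particular, for all x, λ ∈ ℝ, (S(λx) - 1/2)^2 ≤ S(λ²x²) - 1/2. -/
/-- The logistic sigmoid. -/
noncomputable def S (z : ℝ) : ℝ := 1 / (1 + Real.exp (-z))

lemma S_zero : S 0 = 1 / 2 := by norm_num [S]

lemma exp_neg_pos (z : ℝ) : (0:ℝ) < 1 + Real.exp (-z) := by positivity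

lemma S_mono {a b : ℝ} (h : a ≤ b) : S a ≤ S b := by
  unfold S
  rw [div_le_div_iff₀ (exp_neg_pos a) (exp_neg_pos b)]
  have := Real.exp_le_exp.2 (neg_le_neg h)
  linarith

lemma S_sub_half (z : ℝ) :
    S z - 1 / 2 = (1 - Real.exp (-z)) / (2 * (1 + Real.exp (-z))) := by
  have h := exp_neg_pos z
  unfold S
  field_simp [S]
  ring

lemma S_neg (z : ℝ) : S (-z) - 1 / 2 = -(S z - 1 / 2) := by
  have h1 := exp_neg_pos z
  have h2 := exp_neg_pos (-z)
  have he : Real.exp (- -z) = 1 / Real.exp (-z) := by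
    rw [neg_neg, Real.exp_neg, one_div, inv_inv]
  unfold S
  rw [he]
  have h3 := (Real.exp_pos (-z))
  field_simp
  ring

lemma taylor_lower {t : ℝ} (h0 : 0 ≤ t) (h1 : t ≤ 1) :
    1 - t + t ^ 2 / 2 - t ^ 3 / 6 - 5 * t ^ 4 / 96 ≤ Real.exp (-t) := by
  have habs : |(-t)| ≤ 1 := by rw [abs_neg, abs_of_nonneg h0]; exact h1
  have h := Real.exp_bound habs (n := 4) (by norm_num)
  rw [abs_sub_le_iff] at h
  have h' := h.2
  have hsum : ∑ m ∈ Finset.range 4, (-t) ^ m / (m.factorial : ℝ)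
      = 1 - t + t ^ 2 / 2 - t ^ 3 / 6 := by
    simp [Finset.sum_range_succ, Nat.factorial]
    ring
  rw [hsum] at h'
  have habs4 : |(-t)| ^ 4 = t ^ 4 := by rw [abs_neg, abs_of_nonneg h0]
  rw [habs4] at h'
  norm_num [Nat.factorial] at h'
  nlinarith [h']

lemma taylor_upper {t : ℝ} (h0 : 0 ≤ t) (h1 : t ≤ 1) :
    Real.exp (-t) ≤ 1 - t + t ^ 2 / 2 - t ^ 3 / 6 + 5 * t ^ 4 / 96 := by
  have habs : |(-t)| ≤ 1 := by rw [abs_neg, abs_of_nonneg h0]; exact h1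
  have h := Real.exp_bound habs (n := 4) (by norm_num)
  rw [abs_sub_le_iff] at h
  have h' := h.1
  have hsum : ∑ m ∈ Finset.range 4, (-t) ^ m / (m.factorial : ℝ)
      = 1 - t + t ^ 2 / 2 - t ^ 3 / 6 := by
    simp [Finset.sum_range_succ, Nat.factorial]
    ring
  rw [hsum] at h'
  have habs4 : |(-t)| ^ 4 = t ^ 4 := by rw [abs_neg, abs_of_nonneg h0]
  rw [habs4] at h'
  norm_num [Nat.factorial] at h'
  nlinarith [h']

set_option maxHeartbeats 1000000 in
lemma key {X : ℝ} (hX : 0 ≤ X) : (S X - 1 / 2) ^ 2 ≤ S (X ^ 2) - 1 / 2 := by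
  rcases le_or_gt X 1 with hX1 | hX1
  · -- small case
    set a := Real.exp (-X) with ha_def
    set b := Real.exp (-X ^ 2) with hb_def
    have ha0 : 0 < a := Real.exp_pos _
    have hb0 : 0 < b := Real.exp_pos _
    have ha1 : a ≤ 1 := Real.exp_le_one_iff.2 (by linarith)
    have hb1 : b ≤ 1 := Real.exp_le_one_iff.2 (by nlinarith)
    have haL : 1 - X + X ^ 2 / 2 - X ^ 3 / 6 - 5 * X ^ 4 / 96 ≤ a :=
      taylor_lower hX hX1
    have hX2 : 0 ≤ X ^ 2 := sq_nonneg X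
    have hX21 : X ^ 2 ≤ 1 := by nlinarith
    have hbU : b ≤ 1 - X ^ 2 + (X ^ 2) ^ 2 / 2 - (X ^ 2) ^ 3 / 6 + 5 * (X ^ 2) ^ 4 / 96 := by
      have := taylor_upper hX2 hX21
      simpa using this
    rw [S_sub_half, S_sub_half, ← ha_def, ← hb_def, div_pow]
    rw [div_le_div_iff₀ (by positivity) (by positivity)]
    nlinarith [sq_nonneg X, sq_nonneg (X - 1), sq_nonneg (X ^ 2 - X), mul_pos ha0 hb0,
      sq_nonneg (1 - a), sq_nonneg (X ^ 3), mul_nonneg hX2 hX2, sq_nonneg (X ^ 4)]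
  · -- large case : X ≥ 1
    have h1 : S X ≤ S (X ^ 2) := S_mono (by nlinarith)
    have h0 : (1:ℝ) / 2 ≤ S X := by
      have := S_mono hX
      rwa [S_zero] at this
    have hle1 : S X ≤ 1 := by
      unfold S
      rw [div_le_one (exp_neg_pos X)]
      have := (Real.exp_pos (-X)).le
      linarith
    nlinarith

/-- For all real `X`, `(S X - S 0)^2 ≤ S (X^2) - S 0`; in particular, for all `x, l`,
`(S (l*x) - 1/2)^2 ≤ S (l^2 * x^2) - 1/2`. -/
theorem sigmoid_sq_ineq :
    (∀ X : ℝ, (S X - S 0) ^ 2 ≤ S (X ^ 2) - S 0) ∧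
    (∀ x l : ℝ, (S (l * x) - 1 / 2) ^ 2 ≤ S (l ^ 2 * x ^ 2) - 1 / 2) := by
  have main : ∀ X : ℝ, (S X - 1 / 2) ^ 2 ≤ S (X ^ 2) - 1 / 2 := by
    intro X
    rcases le_or_gt 0 X with h | h
    · exact key h
    · have h' : 0 ≤ -X := by linarith
      have := key h'
      rw [S_neg] at this
      have hsq : (-X) ^ 2 = X ^ 2 := by ring
      rw [hsq] at this
      nlinarith
  constructor
  · intro X; rw [S_zero]; exact main X
  · intro x l
    have := main (l * x)
    have h2 : (l * x) ^ 2 = l ^ 2 * x ^ 2 := by ring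
    rwa [h2] at this
end

section
/- Let p ∈ ℕ, x₁,…,x_p ∈ ℝ, and λ ≥ 0. Then Σᵢ (S(λxᵢ) - 1/2)² ≤ p·S₀((λ²/p)·Σᵢ xᵢ²), where S₀(x) = S(x) - 1/2. (This combines the pointwise inequality (S(λx)-1/2)² ≤ S₀(λ²x²) with Jensen's inequality for the concave function S₀ on ℝ₊.) -/
/-- The shifted sigmoid `S₀(x) = S x - 1/2`. -/
noncomputable def S₀ (z : ℝ) : ℝ := S z - 1 / 2

lemma one_add_exp_pos (z : ℝ) : 0 < 1 + Real.exp (-z) := by positivity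

lemma hasDerivAt_S (z : ℝ) : HasDerivAt S (S z * (1 - S z)) z := by
  have h := ((Real.hasDerivAt_exp (-z)).comp z (hasDerivAt_neg z)).const_add 1
  have h2 := h.inv (one_add_exp_pos z).ne'
  have : S = fun z => (1 + Real.exp (-z))⁻¹ := by
    funext w; simp [S, one_div]
  rw [this]
  refine h2.congr_deriv ?_
  have hpos := one_add_exp_pos z
  simp only [Function.comp_apply]
  field_simp [S]
  ring

lemma hasDerivAt_S' (z : ℝ) :
    HasDerivAt (fun w => S w * (1 - S w)) (S z * (1 - S z) * (1 - 2 * S z)) z := by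
  have h := (hasDerivAt_S z).mul ((hasDerivAt_S z).const_sub 1)
  refine h.congr_deriv ?_
  ring

lemma S_half_le {z : ℝ} (hz : 0 ≤ z) : 1 / 2 ≤ S z := by
  have h1 : Real.exp (-z) ≤ 1 := Real.exp_le_one_iff.mpr (by linarith)
  rw [S, div_le_div_iff₀ (by norm_num) (one_add_exp_pos z)]
  linarith

lemma S_le_one (z : ℝ) : S z ≤ 1 := by
  rw [S, div_le_one (one_add_exp_pos z)]
  have := Real.exp_pos (-z); linarith

lemma S_mono_s5 : Monotone S := by
  intro a b hab
  have h : Real.exp (-b) ≤ Real.exp (-a) := Real.exp_le_exp.mpr (by linarith)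
  exact div_le_div_of_nonneg_left one_pos.le (one_add_exp_pos b) (by linarith)

lemma concaveOn_S₀ : ConcaveOn ℝ (Set.Ici (0:ℝ)) S₀ := by
  have hcont : ContinuousOn S₀ (Set.Ici 0) := by
    have : Continuous S := by
      apply Continuous.div continuous_const
      · exact (continuous_const.add (Real.continuous_exp.comp continuous_neg))
      · intro z; exact (one_add_exp_pos z).ne'
    exact (this.sub continuous_const).continuousOn
  refine concaveOn_of_hasDerivWithinAt2_nonpos (f' := fun z => S z * (1 - S z))
    (f'' := fun z => S z * (1 - S z) * (1 - 2 * S z)) (convex_Ici 0) hcont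
    (fun z hz => ?_) (fun z hz => ?_) (fun z hz => ?_)
  · have : HasDerivAt S₀ (S z * (1 - S z)) z := (hasDerivAt_S z).sub_const _
    exact this.hasDerivWithinAt
  · exact (hasDerivAt_S' z).hasDerivWithinAt
  · rw [interior_Ici] at hz
    have h1 : 1 / 2 ≤ S z := S_half_le (le_of_lt hz)
    have h2 : S z ≤ 1 := S_le_one z
    show S z * (1 - S z) * (1 - 2 * S z) ≤ 0
    exact mul_nonpos_of_nonneg_of_nonpos (mul_nonneg (by linarith) (by linarith)) (by linarith)

lemma S₀_nonneg {z : ℝ} (hz : 0 ≤ z) : 0 ≤ S₀ z := by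
  have := S_half_le hz; simp [S₀]; linarith

lemma S₀_le_half (z : ℝ) : S₀ z ≤ 1 / 2 := by
  have := S_le_one z; simp [S₀]; linarith

lemma S₀_zero : S₀ 0 = 0 := by
  simp [S₀, S]
  norm_num

lemma S₀_le_self {z : ℝ} (hz : 0 ≤ z) : S₀ z ≤ z := by
  have ha : 1 - z ≤ Real.exp (-z) := by
    have := Real.add_one_le_exp (-z); linarith
  have hpos := one_add_exp_pos z
  have hexp := Real.exp_pos (-z)
  rw [S₀, S, sub_le_iff_le_add, div_le_iff₀ hpos]
  nlinarith

lemma S₀_neg (z : ℝ) : S₀ (-z) = - S₀ z := by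
  have h1 := one_add_exp_pos z
  have h2 := one_add_exp_pos (-z)
  have hmul : Real.exp (-z) * Real.exp z = 1 := by
    rw [← Real.exp_add]; simp
  simp only [S₀, S, neg_neg]
  field_simp
  nlinarith

lemma pointwise (t : ℝ) : S₀ t ^ 2 ≤ S₀ (t ^ 2) := by
  -- reduce to t ≥ 0
  wlog ht : 0 ≤ t with H
  · push_neg at ht
    have := H (-t) (by linarith)
    simpa [S₀_neg, neg_pow] using this
  rcases le_or_gt 1 t with h1 | h1
  · -- t ≥ 1 : S₀ t ^ 2 ≤ S₀ t ≤ S₀ (t^2)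
    have hs0 : 0 ≤ S₀ t := S₀_nonneg ht
    have hs1 : S₀ t ≤ 1 / 2 := S₀_le_half t
    have hmono : S₀ t ≤ S₀ (t ^ 2) := by
      have : t ≤ t ^ 2 := by nlinarith
      simp only [S₀]
      have := S_mono_s5 this
      linarith
    nlinarith
  · -- 0 ≤ t ≤ 1 : concavity scaling : S₀ (t * t) ≥ t * S₀ t ≥ S₀ t ^ 2
    have hs0 : 0 ≤ S₀ t := S₀_nonneg ht
    have hself : S₀ t ≤ t := S₀_le_self ht
    have hscale : t * S₀ t ≤ S₀ (t ^ 2) := by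
      have h := concaveOn_S₀.2 (Set.mem_Ici.mpr ht) (Set.mem_Ici.mpr (le_refl (0:ℝ)))
        ht (by linarith : (0:ℝ) ≤ 1 - t) (by ring)
      simp only [smul_eq_mul, S₀_zero, mul_zero, add_zero] at h
      convert h using 2
      · rfl
      · ring
    nlinarith

/-- For `x₁,…,x_p` and `l ≥ 0`,
`∑ i, (S (l * xᵢ) - 1/2)² ≤ p * S₀ ((l²/p) * ∑ i, xᵢ²)`. -/
theorem sigmoid_sum_jensen (p : ℕ) (hp : 0 < p) (x : Fin p → ℝ) (l : ℝ) (hl : 0 ≤ l) :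
    ∑ i, (S (l * x i) - 1 / 2) ^ 2 ≤
      (p : ℝ) * S₀ (l ^ 2 / (p : ℝ) * ∑ i, (x i) ^ 2) := by
  have hpR : (0:ℝ) < p := Nat.cast_pos.mpr hp
  -- step 1: pointwise
  have step1 : ∑ i, (S (l * x i) - 1 / 2) ^ 2 ≤ ∑ i, S₀ (l ^ 2 * (x i) ^ 2) := by
    apply Finset.sum_le_sum
    intro i _
    have := pointwise (l * x i)
    calc (S (l * x i) - 1 / 2) ^ 2 = S₀ (l * x i) ^ 2 := by rw [S₀]
    _ ≤ S₀ ((l * x i) ^ 2) := this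
    _ = S₀ (l ^ 2 * (x i) ^ 2) := by ring_nf
  refine step1.trans ?_
  -- step 2: Jensen
  have hjensen := concaveOn_S₀.le_map_sum (t := Finset.univ) (w := fun _ : Fin p => 1 / (p:ℝ))
    (p := fun i => l ^ 2 * (x i) ^ 2)
    (fun i _ => by positivity)
    (by simp [Finset.sum_const, Finset.card_univ]; field_simp)
    (fun i _ => Set.mem_Ici.mpr (by positivity))
  simp only [smul_eq_mul] at hjensen
  rw [← Finset.mul_sum] at hjensen
  have h1 : (1 / (p:ℝ)) * ∑ i, S₀ (l ^ 2 * (x i) ^ 2) ≤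
      S₀ (l ^ 2 / (p:ℝ) * ∑ i, (x i) ^ 2) := by
    convert hjensen using 2
    rfl
    rw [Finset.mul_sum]
    apply Finset.sum_congr rfl
    intro i _
    field_simp
  calc ∑ i, S₀ (l ^ 2 * (x i) ^ 2)
      = (p:ℝ) * ((1 / (p:ℝ)) * ∑ i, S₀ (l ^ 2 * (x i) ^ 2)) := by field_simp
    _ ≤ (p:ℝ) * S₀ (l ^ 2 / (p:ℝ) * ∑ i, (x i) ^ 2) :=
        mul_le_mul_of_nonneg_left h1 hpR.le
end
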